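/- arXiv:1710.11307 — 3 statements merged into one kernel-verified Lean document; each statement's English description precedes it below -/
import Mathlib

section
/- (Opial–Passty ergodic lemma.) Let H be a real Hilbert space and S ⊆ H a nonempty set. Let (α_k) be a sequence of positive reals with Σ_{k≥1} α_k = +∞, let (x_k) be a sequence in H, and define the weighted averages z_k := (1/τ_k) Σ_{n=1}^k α_n x_n with τ_k := Σ_{n=1}^k α_n. If (i) for every z ∈ S the limit lim_{k→∞} ‖x_k − z‖ exists, and (ii) every weak sequential cluster point of (z_k) belongs to S, then (z_k) converges weakly to a point of S. -/
open scoped RealInnerProductSpace BigOperators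
open Filter Topology

private lemma weighted_cesaro (α : ℕ → ℝ) (hα : ∀ k, 1 ≤ k → 0 < α k)
    (hτ : Tendsto (fun k => ∑ n ∈ Finset.Icc 1 k, α n) atTop atTop)
    (a : ℕ → ℝ) (L : ℝ) (ha : Tendsto a atTop (𝓝 L)) :
    Tendsto (fun k => (∑ n ∈ Finset.Icc 1 k, α n)⁻¹ * ∑ n ∈ Finset.Icc 1 k, α n * a n)
      atTop (𝓝 L) := by
  have hτpos : ∀ k, 1 ≤ k → 0 < ∑ n ∈ Finset.Icc 1 k, α n := by
    intro k hk
    apply Finset.sum_pos (fun n hn => hα n (Finset.mem_Icc.mp hn).1)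
    exact ⟨1, Finset.mem_Icc.mpr ⟨le_refl 1, hk⟩⟩
  rw [Metric.tendsto_atTop]
  intro ε hε
  obtain ⟨N₀, hN₀⟩ := Metric.tendsto_atTop.mp ha (ε/4) (by positivity)
  set N₁ := max N₀ 1 with hN₁def
  set B := ∑ n ∈ Finset.Icc 1 N₁, α n * |a n - L| with hB
  have hB0 : 0 ≤ B := Finset.sum_nonneg fun n hn => by
    have h1 := (hα n (Finset.mem_Icc.mp hn).1).le
    positivity
  obtain ⟨N₂, hN₂⟩ := (tendsto_atTop.mp hτ (4*B/ε + 1)).exists_forall_of_atTop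
  refine ⟨max N₁ N₂, fun k hk => ?_⟩
  have hkN₁ : N₁ ≤ k := le_trans (le_max_left _ _) hk
  have hk1 : 1 ≤ k := le_trans (le_max_right _ _) hkN₁
  set τ := ∑ n ∈ Finset.Icc 1 k, α n with hτdef
  have hτk : 0 < τ := hτpos k hk1
  have hτbig : 4*B/ε + 1 ≤ τ := hN₂ k (le_trans (le_max_right _ _) hk)
  -- rewrite difference
  have key : (τ⁻¹ * ∑ n ∈ Finset.Icc 1 k, α n * a n) - L
      = τ⁻¹ * ∑ n ∈ Finset.Icc 1 k, α n * (a n - L) := by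
    have : ∑ n ∈ Finset.Icc 1 k, α n * (a n - L)
        = (∑ n ∈ Finset.Icc 1 k, α n * a n) - τ * L := by
      rw [hτdef, Finset.sum_mul, ← Finset.sum_sub_distrib]
      congr 1; ext n; ring
    rw [this]; field_simp
  rw [Real.dist_eq, key, abs_mul, abs_inv, abs_of_pos hτk]
  -- split the sum
  have hsplit : Finset.Icc 1 k = Finset.Icc 1 N₁ ∪ Finset.Ioc N₁ k := by
    ext n
    simp only [Finset.mem_Icc, Finset.mem_union, Finset.mem_Ioc]
    omega
  have hdisj : Disjoint (Finset.Icc 1 N₁) (Finset.Ioc N₁ k) := by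
    simp [Finset.disjoint_left, Finset.mem_Icc, Finset.mem_Ioc]
    intro n h1 h2 h3; omega
  have habs : |∑ n ∈ Finset.Icc 1 k, α n * (a n - L)| ≤ B + (ε/4) * τ := by
    calc |∑ n ∈ Finset.Icc 1 k, α n * (a n - L)|
        ≤ ∑ n ∈ Finset.Icc 1 k, |α n * (a n - L)| := Finset.abs_sum_le_sum_abs _ _
      _ = ∑ n ∈ Finset.Icc 1 k, α n * |a n - L| := by
          apply Finset.sum_congr rfl; intro n hn
          rw [abs_mul, abs_of_pos (hα n (Finset.mem_Icc.mp hn).1)]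
      _ = B + ∑ n ∈ Finset.Ioc N₁ k, α n * |a n - L| := by
          rw [hsplit, Finset.sum_union hdisj]
      _ ≤ B + ∑ n ∈ Finset.Ioc N₁ k, α n * (ε/4) := by
          gcongr B + ?_
          apply Finset.sum_le_sum; intro n hn
          have hn' := Finset.mem_Ioc.mp hn
          have : N₀ ≤ n := le_trans (le_max_left _ _) hn'.1.le
          have := (hN₀ n this)
          rw [Real.dist_eq] at this
          have hαn := (hα n (le_trans (le_max_right N₀ 1) hn'.1.le)).le
          exact mul_le_mul_of_nonneg_left this.le hαn
      _ = B + (ε/4) * ∑ n ∈ Finset.Ioc N₁ k, α n := by rw [← Finset.sum_mul]; ring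
      _ ≤ B + (ε/4) * τ := by
          gcongr
          rw [hτdef, hsplit, Finset.sum_union hdisj]
          have : 0 ≤ ∑ n ∈ Finset.Icc 1 N₁, α n :=
            Finset.sum_nonneg fun n hn => (hα n (Finset.mem_Icc.mp hn).1).le
          linarith
  have hτB : τ⁻¹ * B ≤ ε/4 := by
    rw [inv_mul_le_iff₀ hτk]
    have h2 : ε/4 * (4*B/ε + 1) = B + ε/4 := by field_simp
    nlinarith [mul_le_mul_of_nonneg_left hτbig (by positivity : (0:ℝ) ≤ ε/4)]
  calc τ⁻¹ * |∑ n ∈ Finset.Icc 1 k, α n * (a n - L)| ≤ τ⁻¹ * (B + (ε/4) * τ) := by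
        exact mul_le_mul_of_nonneg_left habs (inv_nonneg.mpr hτk.le)
    _ = τ⁻¹ * B + (ε/4) * (τ⁻¹ * τ) := by ring
    _ = τ⁻¹ * B + ε/4 := by rw [inv_mul_cancel₀ hτk.ne']; ring
    _ ≤ ε/4 + ε/4 := by linarith
    _ < ε := by linarith

private lemma weak_seq_compact {H : Type*} [NormedAddCommGroup H] [InnerProductSpace ℝ H]
    [CompleteSpace H] (C : ℝ) (v : ℕ → H) (hv : ∀ k, ‖v k‖ ≤ C) :
    ∃ y : H, ∃ φ : ℕ → ℕ, StrictMono φ ∧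
      ∀ w : H, Tendsto (fun j => ⟪w, v (φ j)⟫) atTop (𝓝 ⟪w, y⟫) := by
  have hC0 : 0 ≤ C := le_trans (norm_nonneg _) (hv 0)
  -- the closed span of the range of v
  set V : Submodule ℝ H := (Submodule.span ℝ (Set.range v)).topologicalClosure with hV
  haveI : CompleteSpace V := (Submodule.span ℝ (Set.range v)).isClosed_topologicalClosure.completeSpace_coe
  have hvV : ∀ k, v k ∈ V := fun k =>
    Submodule.le_topologicalClosure _ (Submodule.subset_span (Set.mem_range_self k))
  -- a countable dense sequence in V
  have hsep : TopologicalSpace.IsSeparable (V : Set H) := by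
    rw [hV]
    exact ((Set.countable_range v).isSeparable.span).closure
  obtain ⟨c, hcc, hcd⟩ := hsep
  have hcne : c.Nonempty := by
    rcases Set.eq_empty_or_nonempty c with h | h
    · exfalso
      have : (0 : H) ∈ closure c := hcd V.zero_mem
      rw [h, closure_empty] at this
      exact this
    · exact h
  obtain ⟨e, he⟩ := hcc.exists_eq_range hcne
  have hdense : ∀ u : H, u ∈ V → ∀ ε : ℝ, 0 < ε → ∃ i : ℕ, ‖u - e i‖ < ε := by
    intro u hu ε hε
    have := hcd hu
    rw [Metric.mem_closure_iff] at this
    obtain ⟨b, hb, hbd⟩ := this ε hε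
    rw [he] at hb
    obtain ⟨i, rfl⟩ := hb
    exact ⟨i, by rwa [← dist_eq_norm]⟩
  -- diagonal extraction via compactness of a product of intervals
  set g : ℕ → (ℕ → ℝ) := fun k i => ⟪e i, v k⟫ with hg
  have hgmem : ∀ k, g k ∈ Set.pi Set.univ (fun i => Set.Icc (-(‖e i‖ * C)) (‖e i‖ * C)) := by
    intro k i _
    have h1 : |⟪e i, v k⟫| ≤ ‖e i‖ * ‖v k‖ := abs_real_inner_le_norm _ _
    have h2 : ‖e i‖ * ‖v k‖ ≤ ‖e i‖ * C := by
      exact mul_le_mul_of_nonneg_left (hv k) (norm_nonneg _)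
    rw [Set.mem_Icc]
    constructor
    · linarith [(abs_le.mp (h1.trans h2)).1]
    · linarith [(abs_le.mp (h1.trans h2)).2]
  have hcomp : IsCompact (Set.pi Set.univ (fun i : ℕ => Set.Icc (-(‖e i‖ * C)) (‖e i‖ * C))) :=
    isCompact_univ_pi (fun i => isCompact_Icc)
  obtain ⟨b, -, φ, hφ, hgb⟩ := hcomp.tendsto_subseq hgmem
  have hconv : ∀ i, Tendsto (fun j => ⟪e i, v (φ j)⟫) atTop (𝓝 (b i)) := by
    intro i
    have := (continuous_apply i).continuousAt.tendsto.comp hgb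
    exact this
  -- every w gives a Cauchy (hence convergent) sequence of inner products
  have hcauchy : ∀ w : H, ∃ l : ℝ, Tendsto (fun j => ⟪w, v (φ j)⟫) atTop (𝓝 l) := by
    intro w
    -- reduce to u := projection of w onto V
    set u : H := (V.orthogonalProjectionOnto w : H) with hu
    have huV : u ∈ V := (V.orthogonalProjectionOnto w).2
    have horth : ∀ k, ⟪w, v k⟫ = ⟪u, v k⟫ := by
      intro k
      have h0 : ⟪w - u, v k⟫ = 0 :=
        (Submodule.mem_orthogonal' V _).mp (V.sub_starProjection_mem_orthogonal w) (v k) (hvV k)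
      have := inner_sub_left (𝕜 := ℝ) w u (v k)
      rw [h0] at this
      linarith
    suffices h : ∃ l : ℝ, Tendsto (fun j => ⟪u, v (φ j)⟫) atTop (𝓝 l) by
      obtain ⟨l, hl⟩ := h
      exact ⟨l, by simpa only [horth] using hl⟩
    have : CauchySeq (fun j => ⟪u, v (φ j)⟫) := by
      rw [Metric.cauchySeq_iff]
      intro ε hε
      obtain ⟨i, hi⟩ := hdense u huV (ε / (3 * (C + 1))) (by positivity)
      have hnear : ∀ j, |⟪u, v (φ j)⟫ - ⟪e i, v (φ j)⟫| ≤ ε / 3 := by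
        intro j
        have h1 : ⟪u, v (φ j)⟫ - ⟪e i, v (φ j)⟫ = ⟪u - e i, v (φ j)⟫ :=
          (inner_sub_left _ _ _).symm
        rw [h1]
        calc |⟪u - e i, v (φ j)⟫| ≤ ‖u - e i‖ * ‖v (φ j)‖ := abs_real_inner_le_norm _ _
          _ ≤ (ε / (3 * (C + 1))) * (C + 1) := by
              apply mul_le_mul hi.le (le_trans (hv _) (by linarith)) (norm_nonneg _)
              positivity
          _ = ε / 3 := by field_simp
      obtain ⟨N, hN⟩ := (Metric.cauchySeq_iff.mp (hconv i).cauchySeq) (ε / 4) (by positivity)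
      refine ⟨N, fun m hm n hn => ?_⟩
      have h2 := hN m hm n hn
      rw [Real.dist_eq] at h2 ⊢
      calc |⟪u, v (φ m)⟫ - ⟪u, v (φ n)⟫|
          ≤ |⟪u, v (φ m)⟫ - ⟪e i, v (φ m)⟫| + |⟪e i, v (φ m)⟫ - ⟪e i, v (φ n)⟫|
            + |⟪e i, v (φ n)⟫ - ⟪u, v (φ n)⟫| := by
            have := abs_sub_le (⟪u, v (φ m)⟫) (⟪e i, v (φ m)⟫) (⟪u, v (φ n)⟫)
            have := abs_sub_le (⟪e i, v (φ m)⟫) (⟪e i, v (φ n)⟫) (⟪u, v (φ n)⟫)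
            linarith [abs_sub_le (⟪u, v (φ m)⟫) (⟪e i, v (φ m)⟫) (⟪u, v (φ n)⟫),
              abs_sub_le (⟪e i, v (φ m)⟫) (⟪e i, v (φ n)⟫) (⟪u, v (φ n)⟫)]
        _ ≤ ε/3 + ε/4 + ε/3 := by
            have h3 := hnear m
            have h4 := hnear n
            rw [abs_sub_comm] at h4
            linarith
        _ < ε := by linarith
    exact cauchySeq_tendsto_of_complete this
  choose l hl using hcauchy
  -- the limit functional is linear and bounded; apply Riesz
  have hadd : ∀ w₁ w₂ : H, l (w₁ + w₂) = l w₁ + l w₂ := by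
    intro w₁ w₂
    refine tendsto_nhds_unique (hl (w₁ + w₂)) ?_
    have := (hl w₁).add (hl w₂)
    simpa only [← inner_add_left] using this
  have hsmul : ∀ (c : ℝ) (w : H), l (c • w) = c * l w := by
    intro c w
    refine tendsto_nhds_unique (hl (c • w)) ?_
    have := (hl w).const_mul c
    simpa only [← real_inner_smul_left] using this
  have hbdd : ∀ w : H, ‖l w‖ ≤ C * ‖w‖ := by
    intro w
    have : ∀ j, |⟪w, v (φ j)⟫| ≤ C * ‖w‖ := by
      intro j
      calc |⟪w, v (φ j)⟫| ≤ ‖w‖ * ‖v (φ j)‖ := abs_real_inner_le_norm _ _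
        _ ≤ ‖w‖ * C := mul_le_mul_of_nonneg_left (hv _) (norm_nonneg _)
        _ = C * ‖w‖ := mul_comm _ _
    have habs : Tendsto (fun j => |⟪w, v (φ j)⟫|) atTop (𝓝 |l w|) := (hl w).abs
    exact le_of_tendsto habs (Eventually.of_forall this)
  set F : H →L[ℝ] ℝ := LinearMap.mkContinuous
    { toFun := l, map_add' := hadd, map_smul' := hsmul } C hbdd with hF
  refine ⟨(InnerProductSpace.toDual ℝ H).symm F, φ, hφ, fun w => ?_⟩
  have : ⟪w, (InnerProductSpace.toDual ℝ H).symm F⟫ = l w := by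
    rw [real_inner_comm, InnerProductSpace.toDual_symm_apply]
    rfl
  rw [this]
  exact hl w

/-- Opial–Passty ergodic lemma: if the distances `‖x_k − z‖` converge for every `z ∈ S` and
every weak sequential cluster point of the weighted averages `(z_k)` belongs to `S`, then
`(z_k)` converges weakly to a point of `S`. -/
theorem opial_passty_ergodic_lemma
    {H : Type*} [NormedAddCommGroup H] [InnerProductSpace ℝ H] [CompleteSpace H]
    (S : Set H) (hS : S.Nonempty)
    (α : ℕ → ℝ) (hα : ∀ k, 1 ≤ k → 0 < α k)
    (hαdiv : ¬ Summable (fun k : ℕ => α k))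
    (x z : ℕ → H)
    (hz : ∀ k, 1 ≤ k →
      z k = (∑ n ∈ Finset.Icc 1 k, α n)⁻¹ • ∑ n ∈ Finset.Icc 1 k, α n • x n)
    (hlim : ∀ w ∈ S, ∃ L : ℝ, Tendsto (fun k => ‖x k - w‖) atTop (𝓝 L))
    (hcluster : ∀ y : H,
      (∃ φ : ℕ → ℕ, StrictMono φ ∧
        ∀ w : H, Tendsto (fun j => ⟪w, z (φ j)⟫) atTop (𝓝 ⟪w, y⟫)) → y ∈ S) :
    ∃ p ∈ S, ∀ w : H, Tendsto (fun k => ⟪w, z k⟫) atTop (𝓝 ⟪w, p⟫) := by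
  -- partial sums of α tend to infinity
  have hτ : Tendsto (fun k => ∑ n ∈ Finset.Icc 1 k, α n) atTop atTop := by
    have hβ : ¬ Summable (fun i : ℕ => α (i + 1)) := by
      rw [summable_nat_add_iff 1]; exact hαdiv
    have hβ0 : ∀ i : ℕ, 0 ≤ α (i + 1) := fun i => (hα (i + 1) (Nat.succ_le_succ (Nat.zero_le i))).le
    have := (not_summable_iff_tendsto_nat_atTop_of_nonneg hβ0).mp hβ
    refine this.congr fun k => ?_
    rw [← Finset.Ico_add_one_right_eq_Icc, Finset.sum_Ico_eq_sum_range]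
    exact Finset.sum_congr rfl fun i _ => by rw [Nat.add_comm]
  have hτpos : ∀ k, 1 ≤ k → 0 < ∑ n ∈ Finset.Icc 1 k, α n := by
    intro k hk
    apply Finset.sum_pos (fun n hn => hα n (Finset.mem_Icc.mp hn).1)
    exact ⟨1, Finset.mem_Icc.mpr ⟨le_refl 1, hk⟩⟩
  -- boundedness of x
  obtain ⟨w₀, hw₀⟩ := hS
  obtain ⟨L₀, hL₀⟩ := hlim w₀ hw₀
  obtain ⟨C₀, hC₀⟩ := hL₀.bddAbove_range
  simp only [mem_upperBounds, Set.mem_range, forall_exists_index, forall_apply_eq_imp_iff]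
    at hC₀
  set C : ℝ := C₀ + ‖w₀‖ with hC
  have hxC : ∀ k, ‖x k‖ ≤ C := by
    intro k
    calc ‖x k‖ = ‖(x k - w₀) + w₀‖ := by rw [sub_add_cancel]
      _ ≤ ‖x k - w₀‖ + ‖w₀‖ := norm_add_le _ _
      _ ≤ C₀ + ‖w₀‖ := by linarith [hC₀ k]
  have hC0 : 0 ≤ C := le_trans (norm_nonneg (x 0)) (hxC 0)
  -- boundedness of z
  set C' : ℝ := max C ‖z 0‖ with hC'
  have hzC : ∀ k, ‖z k‖ ≤ C' := by
    intro k
    rcases Nat.eq_zero_or_pos k with rfl | hk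
    · exact le_max_right _ _
    · refine le_trans ?_ (le_max_left C ‖z 0‖)
      rw [hz k hk, norm_smul, norm_inv, Real.norm_eq_abs, abs_of_pos (hτpos k hk)]
      have h1 : ‖∑ n ∈ Finset.Icc 1 k, α n • x n‖ ≤ (∑ n ∈ Finset.Icc 1 k, α n) * C := by
        calc ‖∑ n ∈ Finset.Icc 1 k, α n • x n‖ ≤ ∑ n ∈ Finset.Icc 1 k, ‖α n • x n‖ :=
              norm_sum_le _ _
          _ ≤ ∑ n ∈ Finset.Icc 1 k, α n * C := by
              apply Finset.sum_le_sum; intro n hn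
              rw [norm_smul, Real.norm_eq_abs, abs_of_pos (hα n (Finset.mem_Icc.mp hn).1)]
              exact mul_le_mul_of_nonneg_left (hxC n) (hα n (Finset.mem_Icc.mp hn).1).le
          _ = (∑ n ∈ Finset.Icc 1 k, α n) * C := by rw [Finset.sum_mul]
      calc (∑ n ∈ Finset.Icc 1 k, α n)⁻¹ * ‖∑ n ∈ Finset.Icc 1 k, α n • x n‖
          ≤ (∑ n ∈ Finset.Icc 1 k, α n)⁻¹ * ((∑ n ∈ Finset.Icc 1 k, α n) * C) := by
            exact mul_le_mul_of_nonneg_left h1 (inv_nonneg.mpr (hτpos k hk).le)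
        _ = C := by
            rw [← mul_assoc, inv_mul_cancel₀ (hτpos k hk).ne', one_mul]
  -- Passty: for p q ∈ S, ⟪p - q, z k⟫ converges
  have passty : ∀ p ∈ S, ∀ q ∈ S, ∃ L : ℝ,
      Tendsto (fun k => ⟪p - q, z k⟫) atTop (𝓝 L) := by
    intro p hp q hq
    obtain ⟨Lp, hLp⟩ := hlim p hp
    obtain ⟨Lq, hLq⟩ := hlim q hq
    set a : ℕ → ℝ := fun n => ⟪p - q, x n⟫ with ha
    set L : ℝ := (Lq ^ 2 - Lp ^ 2 - ‖q‖ ^ 2 + ‖p‖ ^ 2) / 2 with hL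
    have haconv : Tendsto a atTop (𝓝 L) := by
      have hid : ∀ n, a n = (‖x n - q‖ ^ 2 - ‖x n - p‖ ^ 2 - ‖q‖ ^ 2 + ‖p‖ ^ 2) / 2 := by
        intro n
        have e1 : ‖x n - q‖ ^ 2 = ‖x n‖ ^ 2 - 2 * ⟪x n, q⟫ + ‖q‖ ^ 2 := norm_sub_sq_real _ _
        have e2 : ‖x n - p‖ ^ 2 = ‖x n‖ ^ 2 - 2 * ⟪x n, p⟫ + ‖p‖ ^ 2 := norm_sub_sq_real _ _
        have e3 : a n = ⟪x n, p⟫ - ⟪x n, q⟫ := by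
          rw [ha]
          simp only [inner_sub_left]
          rw [real_inner_comm p (x n), real_inner_comm q (x n)]
        rw [e3, e1, e2]; ring
      rw [show a = fun n => (‖x n - q‖ ^ 2 - ‖x n - p‖ ^ 2 - ‖q‖ ^ 2 + ‖p‖ ^ 2) / 2
        from funext hid]
      have h1 : Tendsto (fun n => ‖x n - q‖ ^ 2) atTop (𝓝 (Lq ^ 2)) := hLq.pow 2
      have h2 : Tendsto (fun n => ‖x n - p‖ ^ 2) atTop (𝓝 (Lp ^ 2)) := hLp.pow 2
      exact (((h1.sub h2).sub_const (‖q‖ ^ 2)).add_const (‖p‖ ^ 2)).div_const 2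
    refine ⟨L, ?_⟩
    have hcz := weighted_cesaro α hα hτ a L haconv
    apply hcz.congr'
    filter_upwards [eventually_ge_atTop 1] with k hk
    rw [hz k hk, real_inner_smul_right, inner_sum]
    congr 1
    exact Finset.sum_congr rfl fun n _ => (real_inner_smul_right _ _ _).symm
  -- weak cluster point of the full sequence
  obtain ⟨p, φ, hφ, hφw⟩ := weak_seq_compact C' z hzC
  have hpS : p ∈ S := hcluster p ⟨φ, hφ, hφw⟩
  refine ⟨p, hpS, fun w => ?_⟩
  by_contra hcon
  rw [Metric.tendsto_atTop] at hcon
  push_neg at hcon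
  obtain ⟨ε, hε, hfr⟩ := hcon
  have hfreq : ∃ᶠ n in atTop, ε ≤ dist ⟪w, z n⟫ ⟪w, p⟫ := by
    rw [frequently_atTop]
    intro N
    obtain ⟨n, hn1, hn2⟩ := hfr N
    exact ⟨n, hn1, hn2⟩
  obtain ⟨ψ, hψ, hψε⟩ := Filter.extraction_of_frequently_atTop hfreq
  obtain ⟨q, θ, hθ, hθw⟩ := weak_seq_compact C' (fun j => z (ψ j)) (fun j => hzC _)
  have hqS : q ∈ S := hcluster q ⟨ψ ∘ θ, hψ.comp hθ, fun w' => hθw w'⟩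
  obtain ⟨L, hL⟩ := passty p hpS q hqS
  have h1 : ⟪p - q, p⟫ = L :=
    tendsto_nhds_unique (hφw (p - q)) (hL.comp hφ.tendsto_atTop)
  have h2 : ⟪p - q, q⟫ = L :=
    tendsto_nhds_unique (hθw (p - q)) (hL.comp (hψ.comp hθ).tendsto_atTop)
  have hpq : p = q := by
    have h3 : ⟪p - q, p - q⟫ = 0 := by
      rw [inner_sub_right]
      rw [h1, h2]; ring
    have := inner_self_eq_zero.mp h3
    rwa [sub_eq_zero] at this
  have hθw' : Tendsto (fun j => ⟪w, z (ψ (θ j))⟫) atTop (𝓝 ⟪w, p⟫) := by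
    rw [hpq]; exact hθw w
  have hlim2 : Tendsto (fun j => dist ⟪w, z (ψ (θ j))⟫ ⟪w, p⟫) atTop (𝓝 0) := by
    have := hθw'.dist (tendsto_const_nhds (x := ⟪w, p⟫))
    simpa using this
  have : ε ≤ 0 := ge_of_tendsto hlim2 (Eventually.of_forall fun j => hψε (θ j))
  linarith
end

section
/- Let m be a positive integer, for each i = 1,…,m let A_i : H ⇉ H be a maximally monotone set-valued operator, let α > 0, u ∈ H, and v_i ∈ A_i(u) for i = 1,…,m. Let ψ_0 ∈ H and define ψ_i := J_{αA_i}(ψ_{i−1}) for i = 1,…,m. Then ‖ψ_m − u‖² − ‖ψ_0 − u‖² + Σ_{i=1}^m ‖ψ_i − ψ_{i−1}‖² ≤ 2α Σ_{i=1}^m ⟨v_i, u − ψ_i⟩. -/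
open scoped RealInnerProductSpace Pointwise BigOperators

/-- A set-valued operator `A : H ⇉ H` is monotone. -/
def IsMonotoneOp {H : Type*} [NormedAddCommGroup H] [InnerProductSpace ℝ H]
    (A : H → Set H) : Prop :=
  ∀ ⦃x y u v : H⦄, u ∈ A x → v ∈ A y → 0 ≤ ⟪x - y, u - v⟫

/-- A set-valued operator is maximally monotone. -/
def IsMaxMonotoneOp {H : Type*} [NormedAddCommGroup H] [InnerProductSpace ℝ H]
    (A : H → Set H) : Prop :=
  IsMonotoneOp A ∧
    ∀ B : H → Set H, IsMonotoneOp B → (∀ x, A x ⊆ B x) → ∀ x, B x ⊆ A x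

private lemma telescope (f : ℕ → ℝ) (n : ℕ) :
    ∑ i ∈ Finset.Icc 1 n, (f i - f (i - 1)) = f n - f 0 := by
  induction n with
  | zero => simp
  | succ n ih =>
    rw [Finset.sum_Icc_succ_top (Nat.succ_le_succ (Nat.zero_le n)), ih]
    simp

/-- The telescoped resolvent inequality along a chain of resolvent steps
`ψ_i = J_{αA_i}(ψ_{i−1})`, `i = 1, …, m`. -/
theorem resolvent_chain_inequality
    {H : Type*} [NormedAddCommGroup H] [InnerProductSpace ℝ H]
    (m : ℕ) (hm : 1 ≤ m)
    (A : ℕ → H → Set H) (hA : ∀ i, 1 ≤ i → i ≤ m → IsMaxMonotoneOp (A i))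
    (α : ℝ) (hα : 0 < α)
    (u : H) (v : ℕ → H) (hv : ∀ i, 1 ≤ i → i ≤ m → v i ∈ A i u)
    (ψ : ℕ → H)
    (hψ : ∀ i, 1 ≤ i → i ≤ m → ψ (i - 1) - ψ i ∈ α • A i (ψ i)) :
    ‖ψ m - u‖ ^ 2 - ‖ψ 0 - u‖ ^ 2 + ∑ i ∈ Finset.Icc 1 m, ‖ψ i - ψ (i - 1)‖ ^ 2
      ≤ 2 * α * ∑ i ∈ Finset.Icc 1 m, ⟪v i, u - ψ i⟫ := by
  have key : ∀ i ∈ Finset.Icc 1 m,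
      (‖ψ i - u‖ ^ 2 - ‖ψ (i-1) - u‖ ^ 2) + ‖ψ i - ψ (i - 1)‖ ^ 2
        ≤ 2 * α * ⟪v i, u - ψ i⟫ := by
    intro i hi
    rw [Finset.mem_Icc] at hi
    obtain ⟨h1, h2⟩ := hi
    obtain ⟨w, hw, hweq⟩ := hψ i h1 h2
    have hmono := (hA i h1 h2).1 hw (hv i h1 h2)
    -- ⟪ψ i - u, w - v i⟫ ≥ 0
    have hα' : 0 ≤ α * ⟪ψ i - u, w - v i⟫ := mul_nonneg hα.le hmono
    have hwid : α • w = ψ (i-1) - ψ i := hweq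
    set a := ψ i - u with ha
    set b := ψ (i-1) - u with hb
    have hid : (‖a‖ ^ 2 - ‖b‖ ^ 2) + ‖ψ i - ψ (i - 1)‖ ^ 2
        = 2 * ⟪a, a - b⟫ := by
      have h3 : ψ i - ψ (i-1) = a - b := by rw [ha, hb]; abel
      rw [h3]
      have h4 := norm_sub_sq_real a b
      have h5 : ⟪a, a - b⟫ = ⟪a, a⟫ - ⟪a, b⟫ := by rw [inner_sub_right]
      have h6 : ⟪a, a⟫ = ‖a‖ ^ 2 := real_inner_self_eq_norm_sq a
      linarith
    rw [hid]
    have e1 : a - b = -(α • w) := by rw [hwid, ha, hb]; abel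
    have e2 : ⟪v i, u - ψ i⟫ = -⟪a, v i⟫ := by
      rw [real_inner_comm, show u - ψ i = -a by rw [ha]; abel, inner_neg_left]
    have : ⟪a, a - b⟫ = α * ⟪v i, u - ψ i⟫ - α * ⟪a, w - v i⟫ := by
      rw [e1, inner_neg_right, inner_smul_right, e2, inner_sub_right]
      ring
    rw [this]
    linarith
  have hsum := Finset.sum_le_sum key
  rw [Finset.sum_add_distrib, telescope (fun i => ‖ψ i - u‖ ^ 2), ← Finset.mul_sum] at hsum
  linarith
end

section
/- Let m be a positive integer, for each i = 1,…,m let A_i : H ⇉ H be a maximally monotone set-valued operator, and suppose in addition that A_m is strongly monotone with modulus γ > 0. Let α > 0, u ∈ H, and v_i ∈ A_i(u) for i = 1,…,m. Let ψ_0 ∈ H and define ψ_i := J_{αA_i}(ψ_{i−1}) for i = 1,…,m. Then 2αγ‖ψ_m − u‖² + ‖ψ_m − u‖² − ‖ψ_0 − u‖² + Σ_{i=1}^m ‖ψ_i − ψ_{i−1}‖² ≤ 2α Σ_{i=1}^m ⟨v_i, u − ψ_i⟩. -/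
open scoped RealInnerProductSpace Pointwise BigOperators

/-- A set-valued operator is strongly monotone with modulus `γ`. -/
def IsStronglyMonotoneOp {H : Type*} [NormedAddCommGroup H] [InnerProductSpace ℝ H]
    (A : H → Set H) (γ : ℝ) : Prop :=
  ∀ ⦃x y u v : H⦄, u ∈ A x → v ∈ A y → γ * ‖x - y‖ ^ 2 ≤ ⟪x - y, u - v⟫


private lemma telescope_icc_aux (f : ℕ → ℝ) (m : ℕ) :
    ∑ i ∈ Finset.Icc 1 m, (f i - f (i - 1)) = f m - f 0 := by
  induction m with
  | zero => simp
  | succ n ih =>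
      rw [Finset.sum_Icc_succ_top (Nat.succ_le_succ (Nat.zero_le n)), ih]
      simp

/-- The telescoped resolvent inequality along a chain of resolvent steps when the last
operator `A_m` is strongly monotone. -/
theorem resolvent_chain_inequality_strong
    {H : Type*} [NormedAddCommGroup H] [InnerProductSpace ℝ H]
    (m : ℕ) (hm : 1 ≤ m)
    (A : ℕ → H → Set H) (hA : ∀ i, 1 ≤ i → i ≤ m → IsMaxMonotoneOp (A i))
    (γ : ℝ) (hγ : 0 < γ) (hAm : IsStronglyMonotoneOp (A m) γ)
    (α : ℝ) (hα : 0 < α)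
    (u : H) (v : ℕ → H) (hv : ∀ i, 1 ≤ i → i ≤ m → v i ∈ A i u)
    (ψ : ℕ → H)
    (hψ : ∀ i, 1 ≤ i → i ≤ m → ψ (i - 1) - ψ i ∈ α • A i (ψ i)) :
    2 * α * γ * ‖ψ m - u‖ ^ 2
        + ‖ψ m - u‖ ^ 2 - ‖ψ 0 - u‖ ^ 2 + ∑ i ∈ Finset.Icc 1 m, ‖ψ i - ψ (i - 1)‖ ^ 2
      ≤ 2 * α * ∑ i ∈ Finset.Icc 1 m, ⟪v i, u - ψ i⟫ := by
  have key : ∀ i ∈ Finset.Icc 1 m,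
      2 * α * γ * (if i = m then ‖ψ m - u‖ ^ 2 else 0)
        + (‖ψ i - u‖ ^ 2 - ‖ψ (i - 1) - u‖ ^ 2) + ‖ψ i - ψ (i - 1)‖ ^ 2
      ≤ 2 * α * ⟪v i, u - ψ i⟫ := by
    intro i hi
    obtain ⟨h1, h2⟩ := Finset.mem_Icc.mp hi
    obtain ⟨w, hw, hweq⟩ := Set.mem_smul_set.mp (hψ i h1 h2)
    have hmono : (if i = m then γ * ‖ψ m - u‖ ^ 2 else 0) ≤ ⟪ψ i - u, w - v i⟫ := by
      by_cases h : i = m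
      · subst h; simpa using hAm hw (hv i h1 h2)
      · simp only [h, if_false]
        exact (hA i h1 h2).1 hw (hv i h1 h2)
    have h1' : α * ⟪ψ i - u, w - v i⟫ =
        ⟪ψ i - u, ψ (i - 1) - ψ i⟫ - α * ⟪ψ i - u, v i⟫ := by
      rw [inner_sub_right, ← hweq, real_inner_smul_right]; ring
    have hid : 2 * ⟪ψ i - u, ψ (i - 1) - ψ i⟫ =
        ‖ψ (i - 1) - u‖ ^ 2 - ‖ψ i - u‖ ^ 2 - ‖ψ i - ψ (i - 1)‖ ^ 2 := by
      have e1 : ψ (i - 1) - ψ i = (ψ (i - 1) - u) - (ψ i - u) := by abel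
      have e2 : ψ i - ψ (i - 1) = (ψ i - u) - (ψ (i - 1) - u) := by abel
      have h3 := @norm_sub_sq_real H _ _ (ψ i - u) (ψ (i - 1) - u)
      rw [e1, inner_sub_right, real_inner_self_eq_norm_sq, e2, h3]
      ring
    have hv' : ⟪ψ i - u, v i⟫ = - ⟪v i, u - ψ i⟫ := by
      rw [real_inner_comm, ← inner_neg_right]; congr 1; abel
    have hmul : α * (if i = m then γ * ‖ψ m - u‖ ^ 2 else 0) ≤ α * ⟪ψ i - u, w - v i⟫ :=
      mul_le_mul_of_nonneg_left hmono hα.le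
    rw [h1', hv'] at hmul
    have e : 2 * α * γ * (if i = m then ‖ψ m - u‖ ^ 2 else 0)
        = 2 * (α * (if i = m then γ * ‖ψ m - u‖ ^ 2 else 0)) := by
      split <;> ring
    rw [e]
    linarith [hmul, hid]
  have hsum := Finset.sum_le_sum key
  have e1 : ∑ i ∈ Finset.Icc 1 m,
      (2 * α * γ * (if i = m then ‖ψ m - u‖ ^ 2 else 0)
        + (‖ψ i - u‖ ^ 2 - ‖ψ (i - 1) - u‖ ^ 2) + ‖ψ i - ψ (i - 1)‖ ^ 2)
      = 2 * α * γ * ‖ψ m - u‖ ^ 2 + (‖ψ m - u‖ ^ 2 - ‖ψ 0 - u‖ ^ 2)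
        + ∑ i ∈ Finset.Icc 1 m, ‖ψ i - ψ (i - 1)‖ ^ 2 := by
    rw [Finset.sum_add_distrib, Finset.sum_add_distrib,
      telescope_icc_aux (fun i => ‖ψ i - u‖ ^ 2)]
    congr 1
    congr 1
    simp [mul_ite, Finset.sum_ite_eq', Finset.mem_Icc, hm]
  rw [e1, ← Finset.mul_sum] at hsum
  linarith
end
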